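/- On the region I2 + εR2 < N(1 − 1/R1) with I2, R2 ≥ 0, the partial derivative of ω with respect to I2 equals Nγ1·(1 + β2 ω(I2,R2)/(β2 I2 + Nσ1))/(β2 I2 + N(γ1+σ1)) − 1, and consequently ∂ω/∂I2 + 1 > 0. -/

import Mathlib

theorem omega_deriv_I2
    (N β1 β2 γ1 σ1 ε : ℝ)
    (hN : 0 < N) (hβ1 : 0 < β1) (hβ2 : 0 < β2) (hγ1 : 0 < γ1) (hσ1 : 0 < σ1)
    (hβ1γ1 : β1 > γ1) (hε0 : 0 ≤ ε) (hε1 : ε ≤ 1)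
    (ω : ℝ → ℝ → ℝ)
    (hω : ∀ i r, ω i r = (N * (β1 - γ1) - β1 * i - β1 * ε * r) * (β2 * i + N * σ1) /
        (β1 * (β2 * i + N * (γ1 + σ1))))
    (I2 R2 : ℝ) (hI2 : 0 ≤ I2) (hR2 : 0 ≤ R2)
    (hreg : I2 + ε * R2 < N * (1 - 1 / (β1 / γ1))) :
    HasDerivAt (fun i => ω i R2)
      (N * γ1 * (1 + β2 * ω I2 R2 / (β2 * I2 + N * σ1)) / (β2 * I2 + N * (γ1 + σ1)) - 1)
      I2 ∧
    0 < N * γ1 * (1 + β2 * ω I2 R2 / (β2 * I2 + N * σ1)) / (β2 * I2 + N * (γ1 + σ1)) - 1 + 1 := by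
  have hs : 0 < β2 * I2 + N * σ1 := by positivity
  have hc : 0 < β2 * I2 + N * (γ1 + σ1) := by positivity
  have hden : β1 * (β2 * I2 + N * (γ1 + σ1)) ≠ 0 := by positivity
  -- numerator positivity
  have hnum : 0 < N * (β1 - γ1) - β1 * I2 - β1 * ε * R2 := by
    have h1 : N * (1 - 1 / (β1 / γ1)) = N * (β1 - γ1) / β1 := by
      field_simp
    rw [h1] at hreg
    have := (mul_lt_mul_iff_right₀ hβ1).2 hreg
    rw [mul_div_cancel₀ _ (ne_of_gt hβ1)] at this
    nlinarith
  have hωpos : 0 < ω I2 R2 := by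
    rw [hω]
    positivity
  constructor
  · -- derivative
    have hu : HasDerivAt (fun i : ℝ => (N * (β1 - γ1) - β1 * i - β1 * ε * R2) * (β2 * i + N * σ1))
        ((-β1) * (β2 * I2 + N * σ1) + (N * (β1 - γ1) - β1 * I2 - β1 * ε * R2) * β2) I2 := by
      have h1 : HasDerivAt (fun i : ℝ => N * (β1 - γ1) - β1 * i - β1 * ε * R2) (-β1) I2 := by
        have := ((hasDerivAt_id I2).const_mul β1).const_sub (N * (β1 - γ1))
        simpa using this.sub_const (β1 * ε * R2)
      have h2 : HasDerivAt (fun i : ℝ => β2 * i + N * σ1) β2 I2 := by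
        simpa using ((hasDerivAt_id I2).const_mul β2).add_const (N * σ1)
      exact h1.mul h2
    have hv : HasDerivAt (fun i : ℝ => β1 * (β2 * i + N * (γ1 + σ1))) (β1 * β2) I2 := by
      have h2 : HasDerivAt (fun i : ℝ => β2 * i + N * (γ1 + σ1)) β2 I2 := by
        simpa using ((hasDerivAt_id I2).const_mul β2).add_const (N * (γ1 + σ1))
      simpa using h2.const_mul β1
    have hdiv := hu.div hv hden
    have heq : (fun i => ω i R2) = fun i =>
        (N * (β1 - γ1) - β1 * i - β1 * ε * R2) * (β2 * i + N * σ1) /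
        (β1 * (β2 * i + N * (γ1 + σ1))) := by
      funext i; exact hω i R2
    rw [heq]
    refine hdiv.congr_deriv ?_
    rw [hω]
    field_simp
    ring
  · have h2 : 0 < 1 + β2 * ω I2 R2 / (β2 * I2 + N * σ1) := by positivity
    have : 0 < N * γ1 * (1 + β2 * ω I2 R2 / (β2 * I2 + N * σ1)) / (β2 * I2 + N * (γ1 + σ1)) := by
      positivity
    linarith
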